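/- If u_1,…,u_n ∈ ℂ_∞ are linearly independent over k = 𝔽_q(θ), then the Anderson generating functions f_{u_1}(t),…,f_{u_n}(t) are linearly independent over 𝔽_q(t). -/

import Mathlib

/-!
Statement 6 (Chang–Papanikolas, Lemma 3.5.1): If u₁, …, u_n ∈ ℂ∞ are linearly independent
over k = 𝔽q(θ), then the Anderson generating functions
f_{u_i}(t) = ∑_m exp_ρ(u_i/θ^{m+1}) t^m are linearly independent over 𝔽q(t).

Linear independence over the fraction fields 𝔽q(θ) (resp. 𝔽q(t)) is expressed, after clearing
denominators, by linear independence over 𝔽q[θ] (resp. 𝔽q[t]); 𝔽q ⊆ ℂ∞ is the subfield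
{c : c^q = c}.
-/

noncomputable section
open scoped BigOperators

set_option linter.unusedSectionVars false
set_option maxHeartbeats 1000000

namespace Statement6Aux
variable {Cinf : Type} [NontriviallyNormedField Cinf] [IsUltrametricDist Cinf]

lemma norm_add_eq_left {a b : Cinf} (h : ‖b‖ < ‖a‖) : ‖a + b‖ = ‖a‖ := by
  have h1 : ‖a + b‖ ≤ ‖a‖ := (IsUltrametricDist.norm_add_le_max a b).trans (max_le le_rfl h.le)
  have h2 : ‖a‖ ≤ ‖a + b‖ := by
    have h3 : ‖a‖ ≤ max ‖a + b‖ ‖b‖ := by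
      have : a = (a + b) + (-b) := by ring
      calc ‖a‖ = ‖(a + b) + (-b)‖ := by rw [← this]
        _ ≤ max ‖a + b‖ ‖-b‖ := IsUltrametricDist.norm_add_le_max _ _
        _ = max ‖a + b‖ ‖b‖ := by rw [norm_neg]
    rcases max_cases ‖a + b‖ ‖b‖ with ⟨he, _⟩ | ⟨he, _⟩
    · rwa [he] at h3
    · rw [he] at h3; linarith
  linarith


lemma hasSum_norm_le {ι : Type*} {f : ι → Cinf} {a : Cinf} {B : ℝ} (hf : HasSum f a)
    (hB : 0 ≤ B) (h : ∀ i, ‖f i‖ ≤ B) : ‖a‖ ≤ B := by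
  rw [← hf.tsum_eq]
  exact IsUltrametricDist.norm_tsum_le_of_forall_le_of_nonneg hB h


lemma exists_small (ε : ℝ) (hε : 0 < ε) : ∃ z : Cinf, 0 < ‖z‖ ∧ ‖z‖ < ε := by
  obtain ⟨x, hx0, hx1⟩ := NormedField.exists_norm_lt_one Cinf
  obtain ⟨n, hn⟩ := exists_pow_lt_of_lt_one hε hx1
  exact ⟨x ^ n, by rw [norm_pow]; positivity, by rwa [norm_pow]⟩


lemma exists_bound' {g : ℕ → Cinf} (h : Filter.Tendsto g Filter.atTop (nhds 0)) :
    ∃ M : ℝ, 1 ≤ M ∧ ∀ i, ‖g i‖ ≤ M := by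
  have h2 : ∀ᶠ i in Filter.atTop, ‖g i‖ < 1 := by
    have h' : Filter.Tendsto (fun i => ‖g i‖) Filter.atTop (nhds 0) := by
      simpa using h.norm
    exact h'.eventually_lt_const (by norm_num : (0:ℝ) < 1)
  obtain ⟨N, hN⟩ := Filter.eventually_atTop.mp h2
  refine ⟨1 + ∑ j ∈ Finset.range N, ‖g j‖,
    le_add_of_nonneg_right (Finset.sum_nonneg fun _ _ => norm_nonneg _), fun i => ?_⟩
  rcases lt_or_ge i N with hi | hi
  · have : ‖g i‖ ≤ ∑ j ∈ Finset.range N, ‖g j‖ :=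
      Finset.single_le_sum (fun _ _ => norm_nonneg _) (Finset.mem_range.mpr hi)
    linarith
  · have := (hN i hi).le
    have h3 : (0:ℝ) ≤ ∑ j ∈ Finset.range N, ‖g j‖ := Finset.sum_nonneg fun _ _ => norm_nonneg _
    linarith


lemma coeff_unique {q : ℕ} (hq2 : 2 ≤ q) {β : ℕ → Cinf}
    (h : ∀ z : Cinf, HasSum (fun m => β m * z ^ q ^ m) 0) (m : ℕ) : β m = 0 := by
  induction m using Nat.strong_induction_on with
  | _ m ih =>
  by_contra hm
  have hBpos : 0 < ‖β m‖ := norm_pos_iff.mpr hm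
  obtain ⟨M, hM1, hM⟩ := exists_bound' (g := β) (by simpa using (h 1).summable.tendsto_atTop_zero)
  have hMpos : (0:ℝ) < M := by linarith
  obtain ⟨z, hz0, hzs⟩ := exists_small (Cinf := Cinf) (min 1 (‖β m‖ / M))
    (lt_min one_pos (by positivity))
  have hz1 : ‖z‖ < 1 := lt_of_lt_of_le hzs (min_le_left _ _)
  have hzB : ‖z‖ < ‖β m‖ / M := lt_of_lt_of_le hzs (min_le_right _ _)
  set f : ℕ → Cinf := fun k => β k * z ^ q ^ k with hf
  have hsum : HasSum f 0 := h z
  have hshift : HasSum (fun n => f (n + (m + 1))) (-∑ i ∈ Finset.range (m + 1), f i) := by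
    refine (hasSum_nat_add_iff (m + 1)).mpr ?_
    simpa using hsum
  have hrange : ∑ i ∈ Finset.range (m + 1), f i = f m := by
    refine Finset.sum_eq_single_of_mem m (Finset.self_mem_range_succ m) ?_
    intro i hi hne
    have hi' := Finset.mem_range.mp hi
    have : β i = 0 := ih i (by omega)
    simp [hf, this]
  rw [hrange] at hshift
  set y : ℝ := ‖z‖ ^ q ^ m with hy
  have hypos : 0 < y := by positivity
  have hy1 : y ≤ ‖z‖ := pow_le_of_le_one (norm_nonneg z) hz1.le (Nat.pos_of_ne_zero (by positivity)).ne'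
  have hbound : ∀ n, ‖f (n + (m + 1))‖ ≤ M * y ^ q := by
    intro n
    have h1 : ‖f (n + (m + 1))‖ = ‖β (n + (m + 1))‖ * ‖z‖ ^ q ^ (n + (m + 1)) := by
      rw [hf]; simp [norm_mul, norm_pow]
    rw [h1]
    have h2 : ‖z‖ ^ q ^ (n + (m + 1)) ≤ ‖z‖ ^ q ^ (m + 1) :=
      pow_le_pow_of_le_one (norm_nonneg z) hz1.le
        (Nat.pow_le_pow_right (by omega) (by omega))
    have h3 : ‖z‖ ^ q ^ (m + 1) = y ^ q := by
      rw [hy, ← pow_mul, pow_succ]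
    calc ‖β (n + (m + 1))‖ * ‖z‖ ^ q ^ (n + (m + 1))
        ≤ M * ‖z‖ ^ q ^ (n + (m + 1)) := by
          apply mul_le_mul_of_nonneg_right (hM _) (by positivity)
      _ ≤ M * (‖z‖ ^ q ^ (m + 1)) := by
          apply mul_le_mul_of_nonneg_left h2 (by linarith)
      _ = M * y ^ q := by rw [h3]
  have hnorm : ‖f m‖ ≤ M * y ^ q := by
    have := hasSum_norm_le hshift (by positivity) hbound
    rwa [norm_neg] at this
  have hfm : ‖f m‖ = ‖β m‖ * y := by rw [hf]; simp [norm_mul, norm_pow, hy]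
  have hlt : M * y ^ q < ‖β m‖ * y := by
    have hyq : y ^ q ≤ y * y := by
      calc y ^ q ≤ y ^ 2 := pow_le_pow_of_le_one hypos.le (le_trans hy1 hz1.le) hq2
        _ = y * y := sq y
    have hMy : M * y < ‖β m‖ := by
      have := (lt_div_iff₀ hMpos).mp (lt_of_le_of_lt hy1 hzB)
      linarith [this]
    calc M * y ^ q ≤ M * (y * y) := by
          apply mul_le_mul_of_nonneg_left hyq (by linarith)
      _ = (M * y) * y := by ring
      _ < ‖β m‖ * y := by
          apply mul_lt_mul_of_pos_right hMy hypos
  rw [hfm] at hnorm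
  linarith


lemma norm_fq_le_one {q : ℕ} (hq2 : 2 ≤ q) {c : Cinf} (h : c ^ q = c) : ‖c‖ ≤ 1 := by
  rcases eq_or_ne c 0 with rfl | hc
  · simp
  by_contra hgt
  push_neg at hgt
  have h1 : ‖c‖ < ‖c‖ ^ q := by
    calc ‖c‖ = ‖c‖ ^ 1 := (pow_one _).symm
    _ < ‖c‖ ^ q := pow_lt_pow_right₀ hgt (by omega)
  rw [← norm_pow, h] at h1
  exact lt_irrefl _ h1


lemma norm_fq_eq_one {q : ℕ} (hq2 : 2 ≤ q) {c : Cinf} (h : c ^ q = c) (hc : c ≠ 0) : ‖c‖ = 1 := by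
  rcases lt_trichotomy ‖c‖ 1 with hlt | he | hgt
  · exfalso
    have hpos : 0 < ‖c‖ := norm_pos_iff.mpr hc
    have h1 : ‖c‖ ^ q < ‖c‖ ^ 1 := pow_lt_pow_right_of_lt_one₀ hpos hlt (by omega)
    rw [← norm_pow, h, pow_one] at h1
    exact lt_irrefl _ h1
  · exact he
  · exact absurd (norm_fq_le_one hq2 h) (not_le.mpr hgt)

/-- If `1 < ‖θ‖` and `c` has `𝔽q`-coefficients with `c.eval θ = 0` then `c = 0`. -/


lemma eval_theta_zero {q : ℕ} (hq2 : 2 ≤ q) {θ : Cinf} (hθ1 : 1 < ‖θ‖) {c : Polynomial Cinf}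
    (hc : ∀ j, (c.coeff j) ^ q = c.coeff j) (h : c.eval θ = 0) : c = 0 := by
  by_contra hne
  set d := c.natDegree with hd
  have hlead : c.coeff d ≠ 0 := by
    rw [hd]
    exact Polynomial.coeff_ne_zero_of_eq_degree (Polynomial.degree_eq_natDegree hne)
  have heval : c.eval θ = ∑ j ∈ Finset.range (d + 1), c.coeff j * θ ^ j :=
    Polynomial.eval_eq_sum_range θ
  rw [Finset.sum_range_succ] at heval
  have hθ0 : (0:ℝ) < ‖θ‖ := by linarith
  have htop : ‖c.coeff d * θ ^ d‖ = ‖θ‖ ^ d := by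
    rw [norm_mul, norm_pow, norm_fq_eq_one hq2 (hc d) hlead, one_mul]
  have hrest : ‖∑ j ∈ Finset.range d, c.coeff j * θ ^ j‖ < ‖θ‖ ^ d := by
    have hB : ‖∑ j ∈ Finset.range d, c.coeff j * θ ^ j‖ ≤ ‖θ‖ ^ d / ‖θ‖ := by
      refine IsUltrametricDist.norm_sum_le_of_forall_le_of_nonneg (by positivity) ?_
      intro j hj
      have hj' := Finset.mem_range.mp hj
      have h1 : ‖c.coeff j * θ ^ j‖ ≤ ‖θ‖ ^ j := by
        rw [norm_mul, norm_pow]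
        have := norm_fq_le_one hq2 (hc j)
        nlinarith [pow_pos hθ0 j]
      refine h1.trans ?_
      rw [le_div_iff₀ hθ0, ← pow_succ]
      exact pow_le_pow_right₀ (by linarith) (by omega)
    refine hB.trans_lt ?_
    rw [div_lt_iff₀ hθ0]
    nlinarith [pow_pos hθ0 d]
  have : ‖c.eval θ‖ = ‖θ‖ ^ d := by
    rw [heval, add_comm, norm_add_eq_left (by rw [htop]; exact hrest), htop]
  rw [h, norm_zero] at this
  have : (0:ℝ) < ‖θ‖ ^ d := pow_pos hθ0 d
  linarith


lemma fq_pow_q_pow {q : ℕ} {c : Cinf} (h : c ^ q = c) (i : ℕ) : c ^ q ^ i = c := by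
  induction i with
  | zero => simp
  | succ i ih => rw [pow_succ, pow_mul, ih, h]


lemma add_pow_q_pow {p mq q : ℕ} [Fact p.Prime] [CharP Cinf p] (hq : q = p ^ mq)
    (x y : Cinf) (i : ℕ) : (x + y) ^ q ^ i = x ^ q ^ i + y ^ q ^ i := by
  subst hq
  rw [← pow_mul p mq i, add_pow_char_pow]

variable {q : ℕ} {α : ℕ → Cinf} {expρ : Cinf → Cinf}


variable {q : ℕ} {α : ℕ → Cinf} {expρ : Cinf → Cinf}


lemma exp_add {p mq : ℕ} [Fact p.Prime] [CharP Cinf p] (hq : q = p ^ mq)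
    (hexp : ∀ z, HasSum (fun i => α i * z ^ q ^ i) (expρ z)) (x y : Cinf) :
    expρ (x + y) = expρ x + expρ y := by
  refine (hexp (x + y)).unique ?_
  have h := (hexp x).add (hexp y)
  convert h using 2 with i
  rw [add_pow_q_pow hq, mul_add]


lemma exp_smul (hexp : ∀ z, HasSum (fun i => α i * z ^ q ^ i) (expρ z))
    {c : Cinf} (hc : c ^ q = c) (x : Cinf) : expρ (c * x) = c * expρ x := by
  refine (hexp (c * x)).unique ?_
  have h := (hexp x).mul_left c
  convert h using 2 with i
  · rfl
  rw [mul_pow, fq_pow_q_pow hc]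
  ring


lemma exp_zero (hq0 : 0 < q) (hexp : ∀ z, HasSum (fun i => α i * z ^ q ^ i) (expρ z)) :
    expρ 0 = 0 := by
  refine (hexp 0).unique ?_
  have : (fun i => α i * (0:Cinf) ^ q ^ i) = fun _ => 0 := by
    funext i
    rw [zero_pow (by positivity), mul_zero]
  rw [this]
  exact hasSum_zero


lemma exp_sum {p mq : ℕ} [Fact p.Prime] [CharP Cinf p] (hq : q = p ^ mq) (hq0 : 0 < q)
    (hexp : ∀ z, HasSum (fun i => α i * z ^ q ^ i) (expρ z))
    {ι : Type*} (s : Finset ι) (f : ι → Cinf) :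
    expρ (∑ i ∈ s, f i) = ∑ i ∈ s, expρ (f i) := by
  classical
  induction s using Finset.induction with
  | empty => simpa using exp_zero hq0 hexp
  | insert _ _ hx ih =>
    rw [Finset.sum_insert hx, Finset.sum_insert hx, exp_add hq hexp, ih]


lemma exp_norm_small (hq2 : 2 ≤ q)
    (hexp : ∀ z, HasSum (fun i => α i * z ^ q ^ i) (expρ z)) (hα0 : α 0 = 1)
    {M : ℝ} (hM1 : 1 ≤ M) (hM : ∀ i, ‖α i‖ ≤ M)
    {w : Cinf} (hw1 : ‖w‖ < 1) (hwM : M * ‖w‖ < 1) : ‖expρ w‖ = ‖w‖ := by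
  rcases eq_or_ne w 0 with rfl | hw0
  · have : expρ 0 = 0 := by
      refine (hexp 0).unique ?_
      have h0 : (fun i => α i * (0:Cinf) ^ q ^ i) = fun _ => 0 := by
        funext i
        rw [zero_pow (by positivity), mul_zero]
      rw [h0]; exact hasSum_zero
    simp [this]
  have hwpos : 0 < ‖w‖ := norm_pos_iff.mpr hw0
  set f : ℕ → Cinf := fun i => α i * w ^ q ^ i with hf
  have hshift : HasSum (fun n => f (n + 1)) (expρ w + -w) := by
    refine (hasSum_nat_add_iff 1).mpr ?_
    have : ∑ i ∈ Finset.range 1, f i = w := by simp [hf, hα0]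
    rw [this]
    simpa using hexp w
  have hbound : ∀ n, ‖f (n + 1)‖ ≤ M * (‖w‖ * ‖w‖) := by
    intro n
    have h1 : ‖f (n + 1)‖ = ‖α (n + 1)‖ * ‖w‖ ^ q ^ (n + 1) := by
      rw [hf]; simp [norm_mul, norm_pow]
    rw [h1]
    have h2 : ‖w‖ ^ q ^ (n + 1) ≤ ‖w‖ ^ 2 :=
      pow_le_pow_of_le_one (norm_nonneg w) hw1.le (by
        calc 2 ≤ q := hq2
          _ = q ^ 1 := (pow_one q).symm
          _ ≤ q ^ (n + 1) := Nat.pow_le_pow_right (by omega) (by omega))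
    calc ‖α (n + 1)‖ * ‖w‖ ^ q ^ (n + 1) ≤ M * ‖w‖ ^ q ^ (n + 1) :=
        mul_le_mul_of_nonneg_right (hM _) (by positivity)
      _ ≤ M * ‖w‖ ^ 2 := mul_le_mul_of_nonneg_left h2 (by linarith)
      _ = M * (‖w‖ * ‖w‖) := by ring
  have hnorm : ‖expρ w + -w‖ ≤ M * (‖w‖ * ‖w‖) := hasSum_norm_le hshift (by positivity) hbound
  have hlt : ‖expρ w + -w‖ < ‖w‖ := by
    have : M * (‖w‖ * ‖w‖) < ‖w‖ := by nlinarith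
    linarith
  have : expρ w = w + (expρ w + -w) := by ring
  rw [this, norm_add_eq_left (by simpa using hlt)]


lemma recursion {p mq q r : ℕ} [Fact p.Prime] [CharP Cinf p] (hq : q = p ^ mq) (hq2 : 2 ≤ q)
    {θ : Cinf} {κ : Fin r → Cinf} {α : ℕ → Cinf} {expρ : Cinf → Cinf}
    (hexp : ∀ z, HasSum (fun i => α i * z ^ q ^ i) (expρ z))
    (hfunc : ∀ z, expρ (θ * z) = θ * expρ z + ∑ i, κ i * expρ z ^ q ^ (i.1 + 1)) (m : ℕ) :
    α m * θ ^ q ^ m = θ * α m +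
      ∑ j : Fin r, (if j.1 + 1 ≤ m then κ j * α (m - (j.1 + 1)) ^ q ^ (j.1 + 1) else 0) := by
  have key : ∀ z : Cinf, HasSum (fun k => (α k * θ ^ q ^ k - (θ * α k +
      ∑ j : Fin r, (if j.1 + 1 ≤ k then κ j * α (k - (j.1 + 1)) ^ q ^ (j.1 + 1) else 0)))
      * z ^ q ^ k) 0 := by
    intro z
    have hL : HasSum (fun k => (α k * θ ^ q ^ k) * z ^ q ^ k) (expρ (θ * z)) := by
      have h := hexp (θ * z)
      convert h using 2 with k
      rw [mul_pow]; ring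
    have hB : HasSum (fun k => (θ * α k) * z ^ q ^ k) (θ * expρ z) := by
      have h := (hexp z).mul_left θ
      convert h using 2 with k; rfl; ring
    have hj : ∀ j : Fin r, HasSum
        (fun k => (if j.1 + 1 ≤ k then κ j * α (k - (j.1 + 1)) ^ q ^ (j.1 + 1) else 0) * z ^ q ^ k)
        (κ j * expρ z ^ q ^ (j.1 + 1)) := by
      intro j
      set s : ℕ := j.1 + 1 with hs
      -- Frobenius map
      have hcont : Continuous (iterateFrobenius Cinf p (mq * s)) := by
        have he : ⇑(iterateFrobenius Cinf p (mq * s)) = fun x : Cinf => x ^ p ^ (mq * s) := by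
          funext x; exact iterateFrobenius_def p (mq * s) x
        rw [he]; exact continuous_pow _
      have hqs : q ^ s = p ^ (mq * s) := by rw [hq, ← pow_mul]
      have hfr : HasSum (fun i => (α i * z ^ q ^ i) ^ q ^ s) (expρ z ^ q ^ s) := by
        have h := (hexp z).map (iterateFrobenius Cinf p (mq * s)) hcont
        have hev : (iterateFrobenius Cinf p (mq * s)) (expρ z) = expρ z ^ q ^ s := by
          rw [iterateFrobenius_def, hqs]
        have heq : (⇑(iterateFrobenius Cinf p (mq * s)) ∘ fun i => α i * z ^ q ^ i)
            = fun i => (α i * z ^ q ^ i) ^ q ^ s := by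
          funext i
          simp only [Function.comp_apply]
          rw [iterateFrobenius_def, hqs]
        rw [hev, heq] at h
        exact h
      have hfr2 : HasSum (fun i => κ j * (α i ^ q ^ s * z ^ q ^ (i + s)))
          (κ j * expρ z ^ q ^ s) := by
        have h := hfr.mul_left (κ j)
        convert h using 2 with i
        · rfl
        rw [mul_pow, ← pow_mul, ← pow_add]
      have hinj : Function.Injective (fun i : ℕ => i + s) := add_left_injective s
      have hvan : ∀ x ∉ Set.range (fun i : ℕ => i + s),
          (if s ≤ x then κ j * α (x - s) ^ q ^ s else 0) * z ^ q ^ x = 0 := by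
        intro x hx
        have hxs : ¬ s ≤ x := fun hc => hx ⟨x - s, by show x - s + s = x; omega⟩
        simp [hxs]
      have hcomp : ((fun k => (if s ≤ k then κ j * α (k - s) ^ q ^ s else 0) * z ^ q ^ k)
          ∘ (fun i : ℕ => i + s)) = fun i => κ j * (α i ^ q ^ s * z ^ q ^ (i + s)) := by
        funext i
        simp only [Function.comp_apply]
        rw [if_pos (by omega : s ≤ i + s)]
        have hii : i + s - s = i := by omega
        rw [hii]; ring
      refine (Function.Injective.hasSum_iff hinj hvan).mp ?_
      rw [hcomp]
      exact hfr2
    have hR : HasSum (fun k => (θ * α k) * z ^ q ^ k +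
        ∑ j : Fin r, (if j.1 + 1 ≤ k then κ j * α (k - (j.1 + 1)) ^ q ^ (j.1 + 1) else 0) * z ^ q ^ k)
        (expρ (θ * z)) := by
      rw [hfunc z]
      exact hB.add (hasSum_sum (fun j _ => hj j))
    have hsub := hL.sub hR
    rw [sub_self] at hsub
    convert hsub using 2 with k
    · rfl
    rw [← Finset.sum_mul]
    ring
  have h0 := coeff_unique hq2 key m
  exact sub_eq_zero.mp h0


lemma theta_small_contradiction {p mq q r : ℕ} [Fact p.Prime] [CharP Cinf p]
    (hq : q = p ^ mq) (hq2 : 2 ≤ q) (hr : 0 < r)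
    {θ : Cinf} (hθ1 : ‖θ‖ ≤ 1)
    {κ : Fin r → Cinf} (hκr : κ ⟨r - 1, Nat.sub_lt hr Nat.one_pos⟩ ≠ 0)
    {α : ℕ → Cinf} (hα0 : α 0 = 1) {expρ : Cinf → Cinf}
    (hexp : ∀ z, HasSum (fun i => α i * z ^ q ^ i) (expρ z))
    (hfunc : ∀ z, expρ (θ * z) = θ * expρ z + ∑ i, κ i * expρ z ^ q ^ (i.1 + 1)) : False := by
  set L : Fin r := ⟨r - 1, by omega⟩ with hL
  set K : ℝ := 1 + ∑ j : Fin r, ‖κ j‖ with hK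
  have hK1 : 1 ≤ K := le_add_of_nonneg_right (Finset.sum_nonneg fun _ _ => norm_nonneg _)
  have hKj : ∀ j : Fin r, ‖κ j‖ ≤ K := by
    intro j
    have h1 : ‖κ j‖ ≤ ∑ j : Fin r, ‖κ j‖ :=
      Finset.single_le_sum (fun _ _ => norm_nonneg _) (Finset.mem_univ j)
    rw [hK]; linarith
  have hκL : (0:ℝ) < ‖κ L‖ := norm_pos_iff.mpr hκr
  set C0 : ℝ := Real.log K - Real.log ‖κ L‖ with hC0
  have hC0nn : 0 ≤ C0 := by
    have h2 := Real.log_le_log hκL (hKj L)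
    rw [hC0]; linarith
  set Q : ℝ := (q : ℝ) with hQ
  have hQ2 : (2:ℝ) ≤ Q := by rw [hQ]; exact_mod_cast hq2
  have hQ0 : (0:ℝ) < Q := by linarith
  have hQpow : ∀ k : ℕ, (0:ℝ) < Q ^ k := fun k => pow_pos hQ0 k
  set w : ℕ → ℝ := fun i => -(Real.log ‖α i‖) / Q ^ i with hw
  have hwdef : ∀ k, w k = -(Real.log ‖α k‖) / Q ^ k := fun k => rfl
  have hrec := fun m => recursion hq hq2 hexp hfunc m
  -- one step of descent
  have hstep : ∀ i, α i ≠ 0 → ∃ i', i < i' ∧ α i' ≠ 0 ∧ w i' ≤ w i + C0 / Q ^ (i + 1) := by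
    intro i hαi
    have pa : (0:ℝ) < ‖α i‖ := norm_pos_iff.mpr hαi
    set m := i + r with hm
    clear_value m
    have hLv : L.1 = r - 1 := rfl
    have hrm := hrec m
    have hsum : (∑ j : Fin r, (if j.1 + 1 ≤ m then κ j * α (m - (j.1 + 1)) ^ q ^ (j.1 + 1) else 0))
        = κ L * α i ^ q ^ r +
          ∑ j ∈ Finset.univ.erase L, κ j * α (m - (j.1 + 1)) ^ q ^ (j.1 + 1) := by
      rw [Finset.sum_congr rfl (fun j _ => if_pos (by omega : j.1 + 1 ≤ m))]
      rw [← Finset.add_sum_erase _ _ (Finset.mem_univ L)]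
      congr 1
      have hidx : m - (L.1 + 1) = i := by omega
      have hexpnt : L.1 + 1 = r := by omega
      rw [hidx, hexpnt]
    rw [hsum] at hrm
    have hLval : κ L * α i ^ q ^ r =
        α m * (θ ^ q ^ m - θ) +
          -(∑ j ∈ Finset.univ.erase L, κ j * α (m - (j.1 + 1)) ^ q ^ (j.1 + 1)) := by
      linear_combination -hrm
    have hnormθ : ‖θ ^ q ^ m - θ‖ ≤ 1 := by
      have h3 := IsUltrametricDist.norm_add_le_max (θ ^ q ^ m) (-θ)
      rw [← sub_eq_add_neg] at h3
      refine h3.trans (max_le ?_ (by simpa using hθ1))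
      rw [norm_pow]; exact pow_le_one₀ (norm_nonneg θ) hθ1
    set φ : ℕ → ℝ := fun s => K * ‖α (m - s)‖ ^ q ^ s with hφ
    have hφdef : ∀ s, φ s = K * ‖α (m - s)‖ ^ q ^ s := fun s => rfl
    have hne : (Finset.range r).Nonempty := ⟨0, Finset.mem_range.mpr hr⟩
    set B := (Finset.range r).sup' hne φ with hB
    have hφB : ∀ s ∈ Finset.range r, φ s ≤ B := fun s hs => Finset.le_sup' φ hs
    have hB0 : (0:ℝ) ≤ B := by
      refine le_trans ?_ (hφB 0 (Finset.mem_range.mpr hr))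
      rw [hφdef]; positivity
    have hmain : ‖κ L * α i ^ q ^ r‖ ≤ B := by
      rw [hLval]
      refine (IsUltrametricDist.norm_add_le_max _ _).trans (max_le ?_ ?_)
      · refine le_trans ?_ (hφB 0 (Finset.mem_range.mpr hr))
        rw [hφdef, norm_mul]
        have h4 : ‖α (m - 0)‖ ^ q ^ 0 = ‖α m‖ := by norm_num
        rw [h4]
        nlinarith [norm_nonneg (α m), norm_nonneg (θ ^ q ^ m - θ)]
      · rw [norm_neg]
        refine IsUltrametricDist.norm_sum_le_of_forall_le_of_nonneg hB0 ?_
        intro j hj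
        have hjL : j ≠ L := Finset.ne_of_mem_erase hj
        have hjlt : j.1 + 1 < r := by
          have hj2 := j.2
          have hj3 : j.1 ≠ r - 1 := by
            intro hc
            exact hjL (Fin.ext (by rw [hc, hL]))
          omega
        refine le_trans ?_ (hφB (j.1 + 1) (Finset.mem_range.mpr hjlt))
        rw [hφdef, norm_mul, norm_pow]
        exact mul_le_mul_of_nonneg_right (hKj j) (by positivity)
    have hLpos : (0:ℝ) < ‖κ L * α i ^ q ^ r‖ := by
      rw [norm_mul, norm_pow]; positivity
    obtain ⟨s, hs, hsle⟩ := (Finset.le_sup'_iff hne).mp (hB ▸ hmain)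
    have hsr : s < r := Finset.mem_range.mp hs
    set i' := m - s with hi'
    have hii'1 : i < i' := by omega
    have hαi' : α i' ≠ 0 := by
      intro hz
      rw [hφdef] at hsle
      rw [← hi', hz, norm_zero] at hsle
      rw [zero_pow (by positivity), mul_zero] at hsle
      linarith
    have pa' : (0:ℝ) < ‖α i'‖ := norm_pos_iff.mpr hαi'
    -- logs
    rw [norm_mul, norm_pow] at hsle
    rw [hφdef, ← hi'] at hsle
    have h1 : Real.log (‖κ L‖ * ‖α i‖ ^ q ^ r) ≤ Real.log (K * ‖α i'‖ ^ q ^ s) :=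
      Real.log_le_log (by positivity) hsle
    rw [Real.log_mul hκL.ne' (by positivity), Real.log_pow,
        Real.log_mul (by linarith : K ≠ 0), Real.log_pow] at h1
    rotate_left
    · positivity
    set A : ℝ := Real.log ‖α i‖ with hA
    set A' : ℝ := Real.log ‖α i'‖ with hA'
    have hcr : ((q ^ r : ℕ) : ℝ) = Q ^ r := by rw [hQ]; push_cast; ring
    have hcs : ((q ^ s : ℕ) : ℝ) = Q ^ s := by rw [hQ]; push_cast; ring
    rw [hcr, hcs] at h1
    have e1 : Q ^ s * Q ^ i' = Q ^ m := by rw [← pow_add]; congr 1; omega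
    have e2 : Q ^ r * Q ^ i = Q ^ m := by rw [← pow_add]; congr 1; omega
    have hh : -(Q ^ s * A') ≤ C0 - Q ^ r * A := by rw [hC0]; linarith
    have key : w i' ≤ C0 / Q ^ m + w i := by
      rw [hwdef, hwdef, ← hA, ← hA']
      have step1 : -A' / Q ^ i' ≤ (C0 - Q ^ r * A) / Q ^ m := by
        rw [div_le_div_iff₀ (hQpow i') (hQpow m)]
        calc -A' * Q ^ m = -(Q ^ s * A') * Q ^ i' := by rw [← e1]; ring
          _ ≤ (C0 - Q ^ r * A) * Q ^ i' := mul_le_mul_of_nonneg_right hh (hQpow i').le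
      refine step1.trans ?_
      have step2 : (C0 - Q ^ r * A) / Q ^ m = C0 / Q ^ m + -A / Q ^ i := by
        rw [← e2]
        field_simp
        ring
      rw [step2]
    have hlast : C0 / Q ^ m ≤ C0 / Q ^ (i + 1) :=
      div_le_div_of_nonneg_left hC0nn (hQpow (i + 1))
        (pow_le_pow_right₀ (by linarith : (1:ℝ) ≤ Q) (by omega))
    exact ⟨i', hii'1, hαi', by linarith⟩
  -- chain
  have hchain : ∀ k, ∃ i, k ≤ i ∧ α i ≠ 0 ∧ w i ≤ C0 * (1 - (1/2:ℝ) ^ i) := by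
    intro k
    induction k with
    | zero =>
      refine ⟨0, le_rfl, by rw [hα0]; exact one_ne_zero, ?_⟩
      rw [hwdef, hα0, norm_one, Real.log_one]
      simp
    | succ k ih =>
      obtain ⟨i, hki, hαi, hwi⟩ := ih
      obtain ⟨i', hii', hαi', hstep'⟩ := hstep i hαi
      refine ⟨i', by omega, hαi', ?_⟩
      have h3 : C0 / Q ^ (i + 1) ≤ C0 * (1/2:ℝ) ^ (i + 1) := by
        have h5 : (2:ℝ) ^ (i + 1) ≤ Q ^ (i + 1) := pow_le_pow_left₀ (by norm_num) hQ2 _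
        calc C0 / Q ^ (i + 1) ≤ C0 / 2 ^ (i + 1) :=
              div_le_div_of_nonneg_left hC0nn (by positivity) h5
          _ = C0 * (1/2:ℝ) ^ (i + 1) := by rw [one_div_pow, mul_one_div]
      have h4 : (1/2:ℝ) ^ i' ≤ (1/2:ℝ) ^ (i + 1) :=
        pow_le_pow_of_le_one (by norm_num) (by norm_num) (by omega)
      have hx : (1/2:ℝ) ^ (i + 1) = (1/2:ℝ) ^ i * (1/2) := pow_succ _ _
      have e3 : C0 * (1 - (1/2:ℝ) ^ i) + C0 * (1/2:ℝ) ^ (i + 1) = C0 * (1 - (1/2:ℝ) ^ (i + 1)) := by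
        rw [hx]; ring
      have e4 : C0 * (1 - (1/2:ℝ) ^ (i + 1)) ≤ C0 * (1 - (1/2:ℝ) ^ i') := by nlinarith
      linarith
  -- entireness
  have hent : ∃ N, ∀ i, N ≤ i → α i ≠ 0 → C0 + 1 ≤ w i := by
    obtain ⟨z, hz⟩ := NormedField.exists_lt_norm Cinf (Real.exp (C0 + 1))
    have hz0 : (0:ℝ) < ‖z‖ := lt_trans (Real.exp_pos _) hz
    have hlogz : C0 + 1 ≤ Real.log ‖z‖ := by
      rw [← Real.log_exp (C0 + 1)]
      exact Real.log_le_log (Real.exp_pos _) hz.le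
    have htend := (hexp z).summable.tendsto_atTop_zero
    have hev : ∀ᶠ i in Filter.atTop, ‖α i * z ^ q ^ i‖ < 1 := by
      have h' : Filter.Tendsto (fun i => ‖α i * z ^ q ^ i‖) Filter.atTop (nhds 0) := by
        simpa using htend.norm
      exact h'.eventually_lt_const one_pos
    obtain ⟨N, hN⟩ := Filter.eventually_atTop.mp hev
    refine ⟨N, fun i hi hαi => ?_⟩
    have h5 := (hN i hi).le
    rw [norm_mul, norm_pow] at h5
    have pa : (0:ℝ) < ‖α i‖ := norm_pos_iff.mpr hαi
    have h6 : Real.log (‖α i‖ * ‖z‖ ^ q ^ i) ≤ 0 := Real.log_nonpos (by positivity) h5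
    rw [Real.log_mul pa.ne' (by positivity), Real.log_pow] at h6
    have hcast : ((q ^ i : ℕ) : ℝ) = Q ^ i := by rw [hQ]; push_cast; ring
    rw [hcast] at h6
    rw [hwdef, le_div_iff₀ (hQpow i)]
    have h7 : Q ^ i * (C0 + 1) ≤ Q ^ i * Real.log ‖z‖ :=
      mul_le_mul_of_nonneg_left hlogz (hQpow i).le
    linarith
  obtain ⟨N, hN⟩ := hent
  obtain ⟨i, hiN, hαi, hwi⟩ := hchain N
  have h1 := hN i hiN hαi
  have h2 : C0 * (1 - (1/2:ℝ) ^ i) ≤ C0 := by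
    nlinarith [pow_nonneg (by norm_num : (0:ℝ) ≤ 1/2) i]
  linarith

end Statement6Aux

open Statement6Aux in
theorem statement6
    -- q a power of the prime p
    (p mq q : ℕ) (hp : p.Prime) (hmq : 0 < mq) (hq : q = p ^ mq)
    -- ℂ∞ : complete, algebraically closed, nonarchimedean, characteristic p
    (Cinf : Type) [NontriviallyNormedField Cinf] [CompleteSpace Cinf]
    [IsAlgClosed Cinf] [IsUltrametricDist Cinf] [CharP Cinf p]
    -- the rank r Drinfeld 𝔽q[t]-module ρ_t = θ + κ₁τ + ⋯ + κ_rτ^r, κ_r ≠ 0, defined over k̄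
    (r : ℕ) (hr : 0 < r)
    (θ : Cinf) (hθ : θ ≠ 0) (κ : Fin r → Cinf)
    (hκr : κ ⟨r - 1, by omega⟩ ≠ 0)
    -- κᵢ ∈ k̄ : each κᵢ is algebraic over 𝔽q(θ)
    (hκbar : ∀ i, ∃ f : Polynomial Cinf, f ≠ 0 ∧
      (∀ m, ∃ gnum gden : Polynomial Cinf,
        (∀ j, (gnum.coeff j) ^ q = gnum.coeff j) ∧ (∀ j, (gden.coeff j) ^ q = gden.coeff j) ∧
        gden.eval θ ≠ 0 ∧ f.coeff m * gden.eval θ = gnum.eval θ) ∧ f.eval (κ i) = 0)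
    -- the exponential exp_ρ(z) = z + ∑_{i≥1} αᵢ z^{qⁱ}, entire, with
    -- exp_ρ(θz) = ρ_t(exp_ρ(z))
    (α : ℕ → Cinf) (hα0 : α 0 = 1)
    (expρ : Cinf → Cinf)
    (hexp : ∀ z, HasSum (fun i => α i * z ^ q ^ i) (expρ z))
    (hfunc : ∀ z, expρ (θ * z) = θ * expρ z + ∑ i, κ i * expρ z ^ q ^ (i.1 + 1))
    -- u₁, …, u_n ∈ ℂ∞ linearly independent over k = 𝔽q(θ)
    (n : ℕ) (u : Fin n → Cinf)
    (hind : ∀ a : Fin n → Polynomial Cinf,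
      (∀ i j, ((a i).coeff j) ^ q = (a i).coeff j) →
      ∑ i, (a i).eval θ * u i = 0 → ∀ i, (a i).eval θ = 0) :
    -- conclusion : f_{u_1}, …, f_{u_n} are linearly independent over 𝔽q(t)
    ∀ c : Fin n → Polynomial Cinf,
      (∀ i j, ((c i).coeff j) ^ q = (c i).coeff j) →
      (∑ i, (c i : PowerSeries Cinf) *
          PowerSeries.mk (fun m => expρ (u i / θ ^ (m + 1))) = 0) →
      ∀ i, c i = 0 := by
  intro c hc hrel
  haveI : Fact p.Prime := ⟨hp⟩
  have hq2 : 2 ≤ q := by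
    rw [hq]
    calc 2 ≤ p := hp.two_le
      _ = p ^ 1 := (pow_one p).symm
      _ ≤ p ^ mq := Nat.pow_le_pow_right hp.pos hmq
  have hq0 : 0 < q := by omega
  rcases le_or_gt ‖θ‖ 1 with hθ1 | hθ1
  · exact fun i => (theta_small_contradiction hq hq2 hr hθ1 hκr hα0 hexp hfunc).elim
  · set d := Finset.univ.sup (fun i : Fin n => (c i).natDegree) with hd
    set S := ∑ i, (c i).eval θ * u i with hS
    have hSm : ∀ m, d ≤ m → expρ (S / θ ^ (m + 1)) = 0 := by
      intro m hm
      have h0 := congrArg (PowerSeries.coeff (R := Cinf) m) hrel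
      rw [map_sum, map_zero] at h0
      have h1 : ∀ i : Fin n, (PowerSeries.coeff (R := Cinf) m) ((c i : PowerSeries Cinf) *
          PowerSeries.mk (fun k => expρ (u i / θ ^ (k + 1))))
          = ∑ ab ∈ Finset.HasAntidiagonal.antidiagonal m, (c i).coeff ab.1 * expρ (u i / θ ^ (ab.2 + 1)) := by
        intro i
        rw [PowerSeries.coeff_mul]
        refine Finset.sum_congr rfl fun ab hab => ?_
        rw [Polynomial.coeff_coe, PowerSeries.coeff_mk]
      rw [Finset.sum_congr rfl (fun i _ => h1 i)] at h0
      have h2 : ∀ i : Fin n, ∀ ab ∈ Finset.HasAntidiagonal.antidiagonal m,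
          (c i).coeff ab.1 * expρ (u i / θ ^ (ab.2 + 1))
          = expρ ((c i).coeff ab.1 * θ ^ ab.1 * u i / θ ^ (m + 1)) := by
        intro i ab hab
        have habm := Finset.HasAntidiagonal.mem_antidiagonal.mp hab
        have hpow : θ ^ (m + 1) = θ ^ ab.1 * θ ^ (ab.2 + 1) := by
          rw [← pow_add]; congr 1; omega
        have harg : (c i).coeff ab.1 * θ ^ ab.1 * u i / θ ^ (m + 1)
            = (c i).coeff ab.1 * (u i / θ ^ (ab.2 + 1)) := by
          rw [hpow]
          have hta : θ ^ ab.1 ≠ 0 := pow_ne_zero _ hθ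
          have htb : θ ^ (ab.2 + 1) ≠ 0 := pow_ne_zero _ hθ
          field_simp
        rw [harg, exp_smul hexp (hc i ab.1)]
      have h0' : ∑ i : Fin n, ∑ ab ∈ Finset.HasAntidiagonal.antidiagonal m,
          expρ ((c i).coeff ab.1 * θ ^ ab.1 * u i / θ ^ (m + 1)) = 0 := by
        rw [← h0]
        exact Finset.sum_congr rfl fun i _ =>
          Finset.sum_congr rfl fun ab hab => (h2 i ab hab).symm
      have h3 : expρ (∑ i : Fin n, ∑ ab ∈ Finset.HasAntidiagonal.antidiagonal m,
          (c i).coeff ab.1 * θ ^ ab.1 * u i / θ ^ (m + 1))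
          = ∑ i : Fin n, ∑ ab ∈ Finset.HasAntidiagonal.antidiagonal m,
          expρ ((c i).coeff ab.1 * θ ^ ab.1 * u i / θ ^ (m + 1)) := by
        rw [exp_sum hq hq0 hexp]
        exact Finset.sum_congr rfl fun i _ => exp_sum hq hq0 hexp _ _
      have h4 : (∑ i : Fin n, ∑ ab ∈ Finset.HasAntidiagonal.antidiagonal m,
          (c i).coeff ab.1 * θ ^ ab.1 * u i / θ ^ (m + 1)) = S / θ ^ (m + 1) := by
        rw [hS, Finset.sum_div]
        refine Finset.sum_congr rfl fun i _ => ?_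
        rw [Finset.Nat.sum_antidiagonal_eq_sum_range_succ_mk]
        have hdeg : (c i).natDegree < m + 1 := by
          have hle : (c i).natDegree ≤ d := by
            rw [hd]; exact Finset.le_sup (f := fun j : Fin n => (c j).natDegree) (Finset.mem_univ i)
          omega
        rw [Polynomial.eval_eq_sum_range' hdeg, Finset.sum_mul, Finset.sum_div]
      rw [← h4, h3, h0']
    have hS0 : S = 0 := by
      by_contra hSne
      obtain ⟨M, hM1, hM⟩ := exists_bound' (g := α)
        (by simpa using (hexp 1).summable.tendsto_atTop_zero)
      have hMpos : (0:ℝ) < M := by linarith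
      have hSpos : 0 < ‖S‖ := norm_pos_iff.mpr hSne
      obtain ⟨m0, hm0⟩ := pow_unbounded_of_one_lt (M * ‖S‖ + ‖S‖) hθ1
      set m := max d m0 with hm
      have hθpow : (0:ℝ) < ‖θ‖ ^ (m + 1) := by positivity
      have hpow : M * ‖S‖ + ‖S‖ < ‖θ‖ ^ (m + 1) :=
        lt_of_lt_of_le hm0 (pow_le_pow_right₀ hθ1.le (by omega))
      set wv : Cinf := S / θ ^ (m + 1) with hwv
      have hw0 : wv ≠ 0 := div_ne_zero hSne (pow_ne_zero _ hθ)
      have hwn : ‖wv‖ = ‖S‖ / ‖θ‖ ^ (m + 1) := by rw [hwv, norm_div, norm_pow]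
      have hw1 : ‖wv‖ < 1 := by
        rw [hwn, div_lt_one hθpow]; nlinarith
      have hwM : M * ‖wv‖ < 1 := by
        rw [hwn]
        have he : M * (‖S‖ / ‖θ‖ ^ (m + 1)) = (M * ‖S‖) / ‖θ‖ ^ (m + 1) := by ring
        rw [he, div_lt_one hθpow]; nlinarith
      have hnm := exp_norm_small hq2 hexp hα0 hM1 hM hw1 hwM
      rw [hSm m (le_max_left _ _), norm_zero] at hnm
      exact hw0 (norm_eq_zero.mp hnm.symm)
    have heval := hind c hc (by rw [← hS]; exact hS0)
    intro i
    exact eval_theta_zero hq2 hθ1 (hc i) (heval i)
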